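/- Consider the SIR⁽²⁾S model with vaccination. The quadruple (ŝ, 0, r̂₀, r̂₁) with ŝ = D/E, r̂₀ = η_s·(c₂+μ+η₁)/E and r̂₁ = η_s·c₁/E is a stationary state (its entries are nonnegative and sum to 1), and it is the unique stationary state whose i-component equals 0. -/
import Mathlib


/-- A stationary state of the SIR⁽²⁾S model with vaccination: nonnegative entries summing
to 1, satisfying the stationarity equations with vaccination rates ηs, η₁. -/
def IsStationarySIR2SVac (β γ μ c₁ c₂ ηs η₁ s i r₀ r₁ : ℝ) : Prop :=
  0 ≤ s ∧ 0 ≤ i ∧ 0 ≤ r₀ ∧ 0 ≤ r₁ ∧ s + i + r₀ + r₁ = 1 ∧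
  μ - β * s * i + c₂ * r₁ - μ * s - ηs * s = 0 ∧
  β * s * i + (β / 2) * r₁ * i - (γ + μ) * i = 0 ∧
  ηs * s + γ * i - (c₁ + μ) * r₀ + η₁ * r₁ = 0 ∧
  c₁ * r₀ - (β / 2) * r₁ * i - (c₂ + μ + η₁) * r₁ = 0

/-- The disease-free equilibrium of the SIR⁽²⁾S model with vaccination:
(shat, 0, rhat₀, rhat₁) with shat = D/E, rhat₀ = ηs·(c₂+μ+η₁)/E, rhat₁ = ηs·c₁/E, where
D = (c₁+μ)(c₂+μ) + μ·η₁ and E = D + ηs·(c₁+c₂+μ+η₁), is a stationary state and is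
the unique stationary state with i-component zero. -/
theorem sir2s_vac_disease_free_equilibrium
    (β γ μ c₁ c₂ ηs η₁ : ℝ) (hβ : 0 < β) (hγ : 0 < γ) (hμ : 0 < μ)
    (hc₁ : 0 < c₁) (hc₂ : 0 < c₂) (hηs : 0 ≤ ηs) (hη₁ : 0 ≤ η₁)
    (D E shat rhat₀ rhat₁ : ℝ)
    (hD : D = (c₁ + μ) * (c₂ + μ) + μ * η₁)
    (hE : E = D + ηs * (c₁ + c₂ + μ + η₁))
    (hshat : shat = D / E)
    (hrhat₀ : rhat₀ = ηs * (c₂ + μ + η₁) / E)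
    (hrhat₁ : rhat₁ = ηs * c₁ / E) :
    IsStationarySIR2SVac β γ μ c₁ c₂ ηs η₁ shat 0 rhat₀ rhat₁ ∧
    (∀ s i r₀ r₁ : ℝ, IsStationarySIR2SVac β γ μ c₁ c₂ ηs η₁ s i r₀ r₁ → i = 0 →
      s = shat ∧ r₀ = rhat₀ ∧ r₁ = rhat₁) := by
  subst hD hE hshat hrhat₀ hrhat₁
  have hD0 : (0:ℝ) < (c₁ + μ) * (c₂ + μ) + μ * η₁ := by
    have h1 : (0:ℝ) < (c₁ + μ) * (c₂ + μ) := by positivity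
    nlinarith [mul_nonneg hμ.le hη₁]
  have hE0 : (0:ℝ) < (c₁ + μ) * (c₂ + μ) + μ * η₁ + ηs * (c₁ + c₂ + μ + η₁) := by
    nlinarith [mul_nonneg hηs (by linarith : (0:ℝ) ≤ c₁ + c₂ + μ + η₁)]
  set E := (c₁ + μ) * (c₂ + μ) + μ * η₁ + ηs * (c₁ + c₂ + μ + η₁) with hEdef
  constructor
  · refine ⟨by positivity, le_refl 0, by positivity, by positivity, ?_, ?_, by ring, ?_, ?_⟩
    · field_simp
      ring
    · field_simp
      ring
    · field_simp
      ring
    · field_simp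
      ring
  · intro s i r₀ r₁ hst hi
    obtain ⟨_, _, _, _, hsum, e1, e2, e3, e4⟩ := hst
    subst hi
    have e1' : μ + c₂ * r₁ - μ * s - ηs * s = 0 := by linarith [e1]
    have e3' : ηs * s - (c₁ + μ) * r₀ + η₁ * r₁ = 0 := by linarith [e3]
    have e4' : c₁ * r₀ - (c₂ + μ + η₁) * r₁ = 0 := by linarith [e4]
    have hr : ((c₁ + μ) * (c₂ + μ) + μ * η₁) * r₁ = ηs * c₁ * s := by
      linear_combination (-c₁) * e3' - (c₁ + μ) * e4'
    have hsE : s * E = (c₁ + μ) * (c₂ + μ) + μ * η₁ := by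
      have hmu : μ * (s * E - ((c₁ + μ) * (c₂ + μ) + μ * η₁)) = 0 := by
        rw [hEdef]
        linear_combination (-((c₁ + μ) * (c₂ + μ) + μ * η₁)) * e1' + c₂ * hr
      rcases mul_eq_zero.mp hmu with h | h
      · exact absurd h hμ.ne'
      · linarith
    have hr₁E : r₁ * E = ηs * c₁ := by
      have hmu : ((c₁ + μ) * (c₂ + μ) + μ * η₁) * (r₁ * E - ηs * c₁) = 0 := by
        linear_combination E * hr + ηs * c₁ * hsE
      rcases mul_eq_zero.mp hmu with h | h
      · exact absurd h hD0.ne'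
      · linarith
    have hr₀E : r₀ * E = ηs * (c₂ + μ + η₁) := by
      have hmu : c₁ * (r₀ * E - ηs * (c₂ + μ + η₁)) = 0 := by
        linear_combination E * e4' + (c₂ + μ + η₁) * hr₁E
      rcases mul_eq_zero.mp hmu with h | h
      · exact absurd h hc₁.ne'
      · linarith
    refine ⟨?_, ?_, ?_⟩ <;> rw [eq_div_iff hE0.ne'] <;> assumption
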